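/- Let H be a finite-dimensional complex inner product space and let Π and Δ be orthogonal projections on H. Then the Moore–Penrose pseudoinverse of the product Π(I − Δ) satisfies (Π(I − Δ))⁺ = (I − Δ) Π (Π − ΠΔΠ)⁺. -/

import Mathlib

open LinearMap

/-- The four Moore–Penrose equations: `B` is the Moore–Penrose pseudoinverse of `A`. -/
def IsMPInv {H : Type*} [NormedAddCommGroup H] [InnerProductSpace ℂ H]
    [FiniteDimensional ℂ H] (A B : H →ₗ[ℂ] H) : Prop :=
  A ∘ₗ B ∘ₗ A = A ∧ B ∘ₗ A ∘ₗ B = B ∧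
    adjoint (A ∘ₗ B) = A ∘ₗ B ∧ adjoint (B ∘ₗ A) = B ∘ₗ A

section Aux

variable {H : Type*} [NormedAddCommGroup H] [InnerProductSpace ℂ H]
  [FiniteDimensional ℂ H]

private lemma mul_star_self_eq_zero {Y : H →ₗ[ℂ] H} (h : Y * star Y = 0) : Y = 0 := by
  have hs : adjoint Y = 0 := by
    ext v
    have h1 : inner ℂ (Y ((adjoint Y) v)) v = (0 : ℂ) := by
      have h2 : (Y * star Y) v = 0 := by rw [h]; rfl
      rw [star_eq_adjoint] at h2
      rw [show Y ((adjoint Y) v) = (Y * adjoint Y) v from rfl, h2, inner_zero_left]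
    rw [← adjoint_inner_right] at h1
    rw [inner_self_eq_zero] at h1
    simpa using h1
  calc Y = adjoint (adjoint Y) := (adjoint_adjoint Y).symm
    _ = 0 := by rw [hs]; simp

private lemma isMPInv_iff (A B : H →ₗ[ℂ] H) :
    IsMPInv A B ↔ (A * (B * A) = A ∧ B * (A * B) = B ∧
      star (A * B) = A * B ∧ star (B * A) = B * A) := by
  simp only [IsMPInv, Module.End.mul_eq_comp, star_eq_adjoint]

private lemma mp_unique {A X Y : H →ₗ[ℂ] H} (hX : IsMPInv A X) (hY : IsMPInv A Y) :
    X = Y := by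
  rw [isMPInv_iff] at hX hY
  obtain ⟨hX1, hX2, hX3, hX4⟩ := hX
  obtain ⟨hY1, hY2, hY3, hY4⟩ := hY
  have hAX : A * X = A * Y := by
    calc A * X = star (A * X) := hX3.symm
      _ = star X * star A := star_mul _ _
      _ = star X * star (A * (Y * A)) := by rw [hY1]
      _ = star X * (star A * (star Y * star A)) := by
            rw [star_mul A (Y * A), star_mul Y A, mul_assoc]
      _ = (star X * star A) * (star Y * star A) := by rw [mul_assoc]
      _ = star (A * X) * star (A * Y) := by rw [star_mul A X, star_mul A Y]
      _ = (A * X) * (A * Y) := by rw [hX3, hY3]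
      _ = (A * (X * A)) * Y := by noncomm_ring
      _ = A * Y := by rw [hX1]
  have hXA : X * A = Y * A := by
    calc X * A = star (X * A) := hX4.symm
      _ = star A * star X := star_mul _ _
      _ = star (A * (Y * A)) * star X := by rw [hY1]
      _ = ((star A * star Y) * star A) * star X := by
            rw [star_mul A (Y * A), star_mul Y A]
      _ = star (Y * A) * (star A * star X) := by rw [star_mul Y A]; noncomm_ring
      _ = (Y * A) * star (X * A) := by rw [hY4, star_mul X A]
      _ = (Y * A) * (X * A) := by rw [hX4]
      _ = Y * (A * (X * A)) := by noncomm_ring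
      _ = Y * A := by rw [hX1]
  calc X = X * (A * X) := hX2.symm
    _ = (X * A) * X := by noncomm_ring
    _ = (Y * A) * X := by rw [hXA]
    _ = Y * (A * X) := by noncomm_ring
    _ = Y * (A * Y) := by rw [hAX]
    _ = Y := hY2

private lemma star_mp {M B : H →ₗ[ℂ] H} (hMs : star M = M) (hB : IsMPInv M B) :
    star B = B := by
  have h := (isMPInv_iff M B).mp hB
  obtain ⟨hB1, hB2, hB3, hB4⟩ := h
  have hB' : IsMPInv M (star B) := by
    rw [isMPInv_iff]
    refine ⟨?_, ?_, ?_, ?_⟩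
    · calc M * (star B * M) = star (star M * (B * star M)) := by
            simp [star_mul, mul_assoc]
        _ = star (M * (B * M)) := by rw [hMs]
        _ = star M := by rw [hB1]
        _ = M := hMs
    · calc star B * (M * star B) = star (B * (star M * B)) := by
            simp [star_mul, mul_assoc]
        _ = star (B * (M * B)) := by rw [hMs]
        _ = star B := by rw [hB2]
    · calc star (M * star B) = B * star M := by simp [star_mul]
        _ = B * M := by rw [hMs]
        _ = star (B * M) := hB4.symm
        _ = star M * star B := star_mul _ _
        _ = M * star B := by rw [hMs]
    · calc star (star B * M) = star M * B := by simp [star_mul]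
        _ = M * B := by rw [hMs]
        _ = star (M * B) := hB3.symm
        _ = star B * star M := star_mul _ _
        _ = star B * M := by rw [hMs]
  exact mp_unique hB' hB

private lemma mp_of_gram {A B : H →ₗ[ℂ] H} (hB : IsMPInv (A * star A) B) :
    IsMPInv A (star A * B) := by
  have hMs : star (A * star A) = A * star A := by
    rw [star_mul, star_star]
  have hBs : star B = B := star_mp hMs hB
  have h := (isMPInv_iff _ B).mp hB
  obtain ⟨hB1, hB2, hB3, hB4⟩ := h
  -- cancellation: (A A*) B A = A
  have hcancel : (A * star A) * (B * A) = A := by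
    have hz : ((A * star A) * B - 1) * (A * star A) = 0 := by
      calc ((A * star A) * B - 1) * (A * star A)
          = (A * star A) * (B * (A * star A)) - (A * star A) := by noncomm_ring
        _ = 0 := by rw [hB1, sub_self]
    have hYz : ((A * star A) * B - 1) * A = 0 := by
      apply mul_star_self_eq_zero
      calc (((A * star A) * B - 1) * A) * star (((A * star A) * B - 1) * A)
          = ((A * star A) * B - 1) * A * (star A * star ((A * star A) * B - 1)) := by
            rw [star_mul]
        _ = (((A * star A) * B - 1) * (A * star A)) * star ((A * star A) * B - 1) := by
            noncomm_ring
        _ = 0 := by rw [hz, zero_mul]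
    calc (A * star A) * (B * A) = ((A * star A) * B - 1) * A + A := by noncomm_ring
      _ = 0 + A := by rw [hYz]
      _ = A := zero_add A
  rw [isMPInv_iff]
  refine ⟨?_, ?_, ?_, ?_⟩
  · calc A * (star A * B * A) = (A * star A) * (B * A) := by noncomm_ring
      _ = A := hcancel
  · calc star A * B * (A * (star A * B))
        = star A * (B * ((A * star A) * B)) := by noncomm_ring
      _ = star A * B := by rw [hB2]
  · calc star (A * (star A * B)) = star ((A * star A) * B) := by rw [mul_assoc]
      _ = (A * star A) * B := hB3
      _ = A * (star A * B) := by rw [mul_assoc]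
  · calc star (star A * B * A) = star A * (star B * star (star A)) := by
          simp [star_mul, mul_assoc]
      _ = star A * (B * A) := by rw [hBs, star_star]
      _ = star A * B * A := by rw [mul_assoc]

end Aux

/-- `(Π(I − Δ))⁺ = (I − Δ) Π (Π − ΠΔΠ)⁺`. -/
theorem stmt4 {H : Type*} [NormedAddCommGroup H] [InnerProductSpace ℂ H]
    [FiniteDimensional ℂ H]
    (Pr Dl : H →ₗ[ℂ] H)
    (hPr : Pr ∘ₗ Pr = Pr) (hPra : adjoint Pr = Pr)
    (hDl : Dl ∘ₗ Dl = Dl) (hDla : adjoint Dl = Dl)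
    (B : H →ₗ[ℂ] H) (hB : IsMPInv (Pr - Pr ∘ₗ Dl ∘ₗ Pr) B)
    (C : H →ₗ[ℂ] H) (hC : IsMPInv (Pr ∘ₗ (LinearMap.id - Dl)) C) :
    C = (LinearMap.id - Dl) ∘ₗ Pr ∘ₗ B := by
  have hPr' : Pr * Pr = Pr := hPr
  have hDl' : Dl * Dl = Dl := hDl
  have hPrs : star Pr = Pr := by rw [star_eq_adjoint, hPra]
  have hDls : star Dl = Dl := by rw [star_eq_adjoint, hDla]
  have hAid : Pr ∘ₗ (LinearMap.id - Dl) = Pr * (1 - Dl) := by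
    rw [Module.End.mul_eq_comp, Module.End.one_eq_id]
  have hAstar : star (Pr * (1 - Dl)) = (1 - Dl) * Pr := by
    rw [star_mul, star_sub, star_one, hDls, hPrs]
  have h0 : (1 - Dl) * (1 - Dl) = 1 - Dl := by
    rw [mul_sub, mul_one, sub_mul, one_mul, hDl']
    abel
  have hM : Pr - Pr ∘ₗ Dl ∘ₗ Pr = (Pr * (1 - Dl)) * star (Pr * (1 - Dl)) := by
    rw [hAstar, mul_assoc, ← mul_assoc (1 - Dl) (1 - Dl) Pr, h0,
      sub_mul, one_mul, mul_sub, hPr']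
    rfl
  rw [hM] at hB
  have hD : IsMPInv (Pr * (1 - Dl)) (star (Pr * (1 - Dl)) * B) := mp_of_gram hB
  rw [hAid] at hC
  have hCD : C = star (Pr * (1 - Dl)) * B := mp_unique hC hD
  rw [hCD, hAstar, Module.End.mul_eq_comp, Module.End.mul_eq_comp, Module.End.one_eq_id, comp_assoc]
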